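/- For any time step t, the expected total opening cost of the rounding algorithm satisfies E[∑_{i∈F} f_i · Y^t_i] ≤ ∑_{i∈F} f_i · y^t_i, where Y^t_i is the indicator that the algorithm opens facility i at time t. -/

import Mathlib

/-!
STATEMENT 11: For any time step t, the expected total opening cost of the rounding algorithm
satisfies E[∑_{i∈F} f_i · Y^t_i] ≤ ∑_{i∈F} f_i · y^t_i, where Y^t_i is the indicator that the
algorithm opens facility i at time t (i.e. that i lies on a 2-cycle of the connection graph
H(x^t), where all time steps share a single set of exponential clocks with rates o_i on
facilities and 1 on clients).
-/

open MeasureTheory ProbabilityTheory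
open scoped Classical


section DFL11AuxSec
open MeasureTheory ProbabilityTheory Set Real
open scoped ENNReal
namespace DFL11Aux


lemma expMeasure_eq_withDensity (r : ℝ) :
    expMeasure r = MeasureTheory.volume.withDensity (exponentialPDF r) := rfl

lemma expMeasure_Iio_zero (r : ℝ) : expMeasure r (Iio 0) = 0 := by
  rw [expMeasure_eq_withDensity, withDensity_apply _ measurableSet_Iio]
  exact lintegral_exponentialPDF_of_nonpos le_rfl

lemma expMeasure_singleton (r x : ℝ) : expMeasure r {x} = 0 := by
  rw [expMeasure_eq_withDensity, withDensity_apply _ (measurableSet_singleton x)]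
  simp [lintegral_singleton]

lemma expMeasure_Iic {r a : ℝ} (hr : 0 < r) (ha : 0 ≤ a) :
    expMeasure r (Iic a) = ENNReal.ofReal (1 - Real.exp (-(r * a))) := by
  rw [expMeasure_eq_withDensity, withDensity_apply _ measurableSet_Iic,
    lintegral_exponentialPDF_eq_antiDeriv hr, if_pos ha]

lemma expMeasure_Ioi {r a : ℝ} (hr : 0 < r) (ha : 0 ≤ a) :
    expMeasure r (Ioi a) = ENNReal.ofReal (Real.exp (-(r * a))) := by
  haveI := isProbabilityMeasure_expMeasure hr
  have h1 : Ioi a = (Iic a)ᶜ := by simp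
  have hE1 : Real.exp (-(r * a)) ≤ 1 := by
    rw [Real.exp_le_one_iff]
    nlinarith
  rw [h1, measure_compl measurableSet_Iic (measure_ne_top _ _), measure_univ,
    expMeasure_Iic hr ha]
  refine ENNReal.sub_eq_of_eq_add ENNReal.ofReal_ne_top ?_
  rw [← ENNReal.ofReal_add (Real.exp_nonneg _) (by linarith), ← ENNReal.ofReal_one]
  · congr 1; ring







/-- Two independent real random variables, one of which is exponentially distributed,
are a.s. distinct. -/
lemma measure_eq_zero_of_indep_exp {Ω : Type*} [MeasurableSpace Ω] (μ : Measure Ω)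
    [IsProbabilityMeasure μ] {X Y : Ω → ℝ} (hX : Measurable X) (hY : Measurable Y)
    (h : IndepFun X Y μ) {r : ℝ} (hr : 0 < r) (hYd : Measure.map Y μ = expMeasure r) :
    μ {ω | X ω = Y ω} = 0 := by
  haveI : IsProbabilityMeasure (Measure.map X μ) := Measure.isProbabilityMeasure_map hX.aemeasurable
  haveI : IsProbabilityMeasure (Measure.map Y μ) := Measure.isProbabilityMeasure_map hY.aemeasurable
  have hD : MeasurableSet {p : ℝ × ℝ | p.1 = p.2} :=
    (isClosed_eq continuous_fst continuous_snd).measurableSet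
  have h1 : {ω | X ω = Y ω} = (fun ω => (X ω, Y ω)) ⁻¹' {p : ℝ × ℝ | p.1 = p.2} := rfl
  rw [h1, ← Measure.map_apply (hX.prodMk hY) hD,
    (indepFun_iff_map_prod_eq_prod_map_map hX.aemeasurable hY.aemeasurable).1 h,
    Measure.prod_apply hD]
  have : ∀ x : ℝ, (Measure.map Y μ) (Prod.mk x ⁻¹' {p : ℝ × ℝ | p.1 = p.2}) = 0 := by
    intro x
    have : Prod.mk x ⁻¹' {p : ℝ × ℝ | p.1 = p.2} = {x} := by ext y; simp [eq_comm]
    rw [this, hYd, expMeasure_singleton]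
  have h2 : ∀ x : ℝ, (Measure.map Y μ) {x} = 0 := fun x => by
    rw [hYd, expMeasure_singleton]
  simp only [this, h2, lintegral_zero]

lemma integral_exp_neg_mul_Ioi {c : ℝ} (hc : 0 < c) :
    ∫ x in Ioi (0:ℝ), Real.exp (-(c * x)) = 1 / c := by
  have hderiv : ∀ x ∈ Ici (0:ℝ), HasDerivAt (fun a => -Real.exp (-(c * a)) / c)
      (Real.exp (-(c * x))) x := by
    intro x _
    have h1 : HasDerivAt (fun a => -Real.exp (-(c * a))) (c * Real.exp (-(c * x))) x :=
      hasDerivAt_neg_exp_mul_exp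
    have := h1.div_const c
    simpa [mul_div_assoc, mul_div_cancel_left₀ _ hc.ne'] using this
  have hint : IntegrableOn (fun x => Real.exp (-(c * x))) (Ioi (0:ℝ)) := by
    simpa [neg_mul] using exp_neg_integrableOn_Ioi 0 hc
  have htend : Filter.Tendsto (fun a => -Real.exp (-(c * a)) / c) Filter.atTop (nhds 0) := by
    have h2 : Filter.Tendsto (fun a : ℝ => -(c * a)) Filter.atTop Filter.atBot := by
      simpa [neg_mul] using (Filter.tendsto_id.const_mul_atTop hc).const_mul_atTop_of_neg
        (by norm_num : (-1:ℝ) < 0)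
    have h3 := (Real.tendsto_exp_atBot.comp h2).neg.div_const c
    simpa using h3
  have := integral_Ioi_of_hasDerivAt_of_tendsto
    (f := fun a => -Real.exp (-(c * a)) / c) (f' := fun x => Real.exp (-(c * x)))
    ((hderiv 0 Set.self_mem_Ici).continuousAt.continuousWithinAt) (fun x hx => hderiv x (Set.mem_Ici.mpr (le_of_lt (Set.mem_Ioi.mp hx)))) hint htend
  rw [this]
  field_simp
  simp





lemma lintegral_exp_neg_expMeasure {r b : ℝ} (hr : 0 < r) (hb : 0 ≤ b) :
    ∫⁻ a, ENNReal.ofReal (Real.exp (-(b * a))) ∂(expMeasure r)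
      = ENNReal.ofReal (r / (r + b)) := by
  have hc : 0 < r + b := by linarith
  have hmg : Measurable fun a : ℝ => ENNReal.ofReal (Real.exp (-(b * a))) := by
    exact (ENNReal.measurable_ofReal.comp ((Real.continuous_exp.measurable).comp
      (measurable_const.mul measurable_id).neg))
  have hpdf : Measurable (exponentialPDF r) :=
    ENNReal.measurable_ofReal.comp (measurable_exponentialPDFReal r)
  rw [show expMeasure r = MeasureTheory.volume.withDensity (exponentialPDF r) from rfl,
    lintegral_withDensity_eq_lintegral_mul _ hpdf hmg]
  have hpt : ∀ a : ℝ, (exponentialPDF r * fun a => ENNReal.ofReal (Real.exp (-(b * a)))) a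
      = ENNReal.ofReal (Set.indicator (Ici (0:ℝ)) (fun a => r * Real.exp (-((r + b) * a))) a) := by
    intro a
    simp only [Pi.mul_apply, exponentialPDF_eq]
    rw [← ENNReal.ofReal_mul (by positivity)]
    congr 1
    by_cases h : 0 ≤ a
    · rw [if_pos h, Set.indicator_apply, if_pos (Set.mem_Ici.mpr h), mul_assoc, ← Real.exp_add]
      ring_nf
    · rw [if_neg h, Set.indicator_apply, if_neg (fun hh => h (Set.mem_Ici.mp hh)), zero_mul]
  rw [lintegral_congr hpt]
  have hind : ∫⁻ a : ℝ, ENNReal.ofReal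
      (Set.indicator (Ici (0:ℝ)) (fun a => r * Real.exp (-((r + b) * a))) a)
      = ∫⁻ a in Ici (0:ℝ), ENNReal.ofReal (r * Real.exp (-((r + b) * a))) := by
    rw [← lintegral_indicator measurableSet_Ici]
    refine lintegral_congr fun a => ?_
    by_cases h : a ∈ Ici (0:ℝ) <;> simp [Set.indicator_apply, h]
  rw [hind, ← Measure.restrict_congr_set Ioi_ae_eq_Ici]
  have hint : IntegrableOn (fun a : ℝ => r * Real.exp (-((r + b) * a))) (Ioi (0:ℝ)) := by
    have := exp_neg_integrableOn_Ioi 0 hc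
    have h2 := this.const_mul r
    have h3 : (fun x : ℝ => r * Real.exp (-(r + b) * x)) = fun a => r * Real.exp (-((r + b) * a)) := by
      funext a; ring_nf
    rwa [h3] at h2
  have hnn : 0 ≤ᵐ[MeasureTheory.volume.restrict (Ioi (0:ℝ))]
      fun a : ℝ => r * Real.exp (-((r + b) * a)) :=
    Filter.Eventually.of_forall fun a => by positivity
  rw [← ofReal_integral_eq_lintegral_ofReal hint hnn, integral_const_mul,
    integral_exp_neg_mul_Ioi hc]
  congr 1
  field_simp


end DFL11Aux
end DFL11AuxSec

namespace DFL11

noncomputable section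

variable {F C : Type*}

/-- Facilities fractionally serving client `j` (neighborhood of `j` in the support graph). -/
def facNbrs [Fintype F] (x : F → C → ℝ) (j : C) : Finset F :=
  Finset.univ.filter fun i => 0 < x i j

/-- Clients fractionally served by facility `i` (neighborhood of `i` in the support graph). -/
def cliNbrs [Fintype C] (x : F → C → ℝ) (i : F) : Finset C :=
  Finset.univ.filter fun j => 0 < x i j

/-- An element of a nonempty finset minimizing `f`. -/
def argminOn {α : Type*} (f : α → ℝ) (s : Finset α) (h : s.Nonempty) : α :=
  Classical.choose (s.exists_min_image f h)

/-- The connection graph: every vertex points to the neighbor (in the support graph of `x`)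
with the smallest clock value (`Q` on facilities, `R` on clients). -/
def nextV [Fintype F] [Fintype C] (x : F → C → ℝ) (Q : F → ℝ) (R : C → ℝ) :
    F ⊕ C → Option (F ⊕ C)
  | Sum.inl i =>
    if h : (cliNbrs x i).Nonempty then some (Sum.inr (argminOn R _ h)) else none
  | Sum.inr j =>
    if h : (facNbrs x j).Nonempty then some (Sum.inl (argminOn Q _ h)) else none

/-- Follow `next`, accumulating visited vertices and stopping just before revisiting one. -/
def pathAux {α : Type*} [DecidableEq α] (next : α → Option α) :
    ℕ → List α → α → List α
  | 0, vis, v => vis ++ [v]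
  | n+1, vis, v =>
    match next v with
    | none => vis ++ [v]
    | some w => if w ∈ vis ++ [v] then vis ++ [v] else pathAux next n (vis ++ [v]) w

/-- The connection path of client `j`: start at `j` and repeatedly follow the unique outgoing
arc of the connection graph, stopping just before revisiting an already visited vertex. -/
def connPath [Fintype F] [Fintype C] [DecidableEq F] [DecidableEq C]
    (x : F → C → ℝ) (Q : F → ℝ) (R : C → ℝ) (j : C) : List (F ⊕ C) :=
  pathAux (nextV x Q R) (Fintype.card F + Fintype.card C) List.nil (Sum.inr j)

/-- The path `p` traverses the arc `(u, v)`. -/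
def traverses {α : Type*} (p : List α) (u v : α) : Prop :=
  ∃ l1 l2 : List α, p = l1 ++ u :: v :: l2

/-- The last facility on a path: the facility to which a client is assigned. -/
def assignedFac (p : List (F ⊕ C)) : Option F :=
  p.reverse.findSome? Sum.getLeft?

/-- Facility `i` lies on a 2-cycle of the connection graph, i.e. it is opened. -/
def opens [Fintype F] [Fintype C] (x : F → C → ℝ) (Q : F → ℝ) (R : C → ℝ) (i : F) : Prop :=
  ∃ j : C, nextV x Q R (Sum.inl i) = some (Sum.inr j) ∧
    nextV x Q R (Sum.inr j) = some (Sum.inl i)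

/-- A preprocessed fractional solution: `x i j ∈ {0, y i}`, `y i ∈ [0,1]`, and every client is
fully fractionally connected. -/
def Preprocessed [Fintype F] (x : F → C → ℝ) (y : F → ℝ) : Prop :=
  (∀ i j, x i j = 0 ∨ x i j = y i) ∧ (∀ i, y i ∈ Set.Icc (0:ℝ) 1) ∧ (∀ j, ∑ i, x i j = 1)

end


section Lemmas

lemma argminOn_mem {α : Type*} (f : α → ℝ) (s : Finset α) (h : s.Nonempty) :
    argminOn f s h ∈ s :=
  (Classical.choose_spec (s.exists_min_image f h)).1

lemma argminOn_le {α : Type*} (f : α → ℝ) (s : Finset α) (h : s.Nonempty)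
    {b : α} (hb : b ∈ s) : f (argminOn f s h) ≤ f b :=
  (Classical.choose_spec (s.exists_min_image f h)).2 b hb

lemma mem_facNbrs {F C : Type*} [Fintype F] {x : F → C → ℝ} {i : F} {j : C} :
    i ∈ facNbrs x j ↔ 0 < x i j := by simp [facNbrs]

lemma mem_cliNbrs {F C : Type*} [Fintype C] {x : F → C → ℝ} {i : F} {j : C} :
    j ∈ cliNbrs x i ↔ 0 < x i j := by simp [cliNbrs]

lemma opens_iff {F C : Type*} [Fintype F] [Fintype C] [DecidableEq F] [DecidableEq C]
    (x : F → C → ℝ) (Q : F → ℝ) (R : C → ℝ)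
    (hR : ∀ (i : F) (j j' : C), j ∈ cliNbrs x i → j' ∈ cliNbrs x i → j ≠ j' → R j ≠ R j')
    (hQ : ∀ (j : C) (i i' : F), i ∈ facNbrs x j → i' ∈ facNbrs x j → i ≠ i' → Q i ≠ Q i')
    (i : F) :
    opens x Q R i ↔ ∃ j : C,
      (j ∈ cliNbrs x i ∧ ∀ j' ∈ cliNbrs x i, j' ≠ j → R j < R j') ∧
      (i ∈ facNbrs x j ∧ ∀ i' ∈ facNbrs x j, i' ≠ i → Q i < Q i') := by
  constructor
  · rintro ⟨j, h1, h2⟩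
    by_cases hne : (cliNbrs x i).Nonempty
    swap
    · simp [nextV, hne] at h1
    by_cases hne2 : (facNbrs x j).Nonempty
    swap
    · simp [nextV, hne2] at h2
    simp only [nextV, dif_pos hne, dif_pos hne2, Option.some.injEq] at h1 h2
    have h1' : argminOn R (cliNbrs x i) hne = j := by
      have := Sum.inr.inj h1; exact this
    have h2' : argminOn Q (facNbrs x j) hne2 = i := by
      have := Sum.inl.inj h2; exact this
    refine ⟨j, ⟨h1' ▸ argminOn_mem R _ hne, fun j' hj' hjj' => ?_⟩,
      ⟨h2' ▸ argminOn_mem Q _ hne2, fun i' hi' hii' => ?_⟩⟩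
    · have hle : R j ≤ R j' := h1' ▸ argminOn_le R _ hne hj'
      have hne' : R j ≠ R j' := hR i j j' (h1' ▸ argminOn_mem R _ hne) hj' (Ne.symm hjj')
      exact lt_of_le_of_ne hle hne'
    · have hle : Q i ≤ Q i' := h2' ▸ argminOn_le Q _ hne2 hi'
      have hne' : Q i ≠ Q i' := hQ j i i' (h2' ▸ argminOn_mem Q _ hne2) hi' (Ne.symm hii')
      exact lt_of_le_of_ne hle hne'
  · rintro ⟨j, ⟨hjc, hstrR⟩, hif, hstrQ⟩
    have hne : (cliNbrs x i).Nonempty := ⟨j, hjc⟩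
    have hne2 : (facNbrs x j).Nonempty := ⟨i, hif⟩
    refine ⟨j, ?_, ?_⟩
    · simp only [nextV, dif_pos hne, Option.some.injEq]
      congr 1
      by_contra hne'
      have hmem := argminOn_mem R (cliNbrs x i) hne
      have hlt := hstrR _ hmem (fun hh => hne' (by rw [hh]))
      exact absurd (argminOn_le R (cliNbrs x i) hne hjc) (not_le.mpr hlt)
    · simp only [nextV, dif_pos hne2, Option.some.injEq]
      congr 1
      by_contra hne'
      have hmem := argminOn_mem Q (facNbrs x j) hne2
      have hlt := hstrQ _ hmem (fun hh => hne' (by rw [hh]))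
      exact absurd (argminOn_le Q (facNbrs x j) hne2 hif) (not_le.mpr hlt)

end Lemmas

theorem expected_opening_cost
    {F C : Type*} [Fintype F] [Fintype C] [DecidableEq F] [DecidableEq C]
    (T : ℕ) (x : ℕ → F → C → ℝ) (y : ℕ → F → ℝ) (o : F → ℝ)
    (hpre : ∀ t', t' < T → Preprocessed (x t') (y t'))
    (ho : ∀ i, o i ∈ Set.Icc (0:ℝ) 1)
    (hyo : ∀ t', t' < T → ∀ i, y t' i = 0 ∨ y t' i = o i)
    (f : F → ℝ) (hf : ∀ i, 0 ≤ f i)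
    {Ω : Type*} [MeasurableSpace Ω] (μ : Measure Ω) [IsProbabilityMeasure μ]
    (Q : F → Ω → ℝ) (R : C → Ω → ℝ)
    (hQmeas : ∀ i : F, 0 < o i → Measurable (Q i))
    (hRmeas : ∀ j : C, Measurable (R j))
    (hindep : iIndepFun
      (fun v : {i : F // 0 < o i} ⊕ C => Sum.elim (fun i => Q i.1) R v) μ)
    (hQdist : ∀ i : F, (h : 0 < o i) → Measure.map (Q i) μ = expMeasure (o i))
    (hRdist : ∀ j : C, Measure.map (R j) μ = expMeasure 1)
    (t : ℕ) (ht : t < T) :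
    ∫ ω, (∑ i : F,
        f i * (if opens (x t) (fun i' => Q i' ω) (fun j' => R j' ω) i
               then (1 : ℝ) else 0)) ∂μ ≤
      ∑ i : F, f i * y t i := by
  obtain ⟨hx0, hy01, hsum⟩ := hpre t ht
  -- basic structure facts
  have hxeq : ∀ {i : F} {j : C}, i ∈ facNbrs (x t) j → x t i j = o i ∧ 0 < o i := by
    intro i j hij
    rw [mem_facNbrs] at hij
    rcases hx0 i j with h | h
    · rw [h] at hij; exact absurd hij (lt_irrefl 0)
    · rcases hyo t ht i with h2 | h2
      · rw [h, h2] at hij; exact absurd hij (lt_irrefl 0)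
      · rw [h, h2] at hij ⊢; exact ⟨rfl, hij⟩
  have hx_zero : ∀ {i : F} {j : C}, i ∉ facNbrs (x t) j → x t i j = 0 := by
    intro i j hij
    rw [mem_facNbrs, not_lt] at hij
    rcases hx0 i j with h | h
    · exact h
    · rcases (hy01 i).1.lt_or_eq with h2 | h2
      · exact absurd (h ▸ h2) (not_lt.mpr hij)
      · rw [h, ← h2]
  have hsumo : ∀ j : C, ∑ i ∈ facNbrs (x t) j, o i = 1 := by
    intro j
    have h1 : ∑ i ∈ facNbrs (x t) j, o i = ∑ i ∈ facNbrs (x t) j, x t i j :=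
      Finset.sum_congr rfl fun i hi => ((hxeq hi).1).symm
    rw [h1, Finset.sum_subset (Finset.subset_univ _) (fun i _ hi => hx_zero hi)]
    exact hsum j
  -- the events
  set A : F → C → Set Ω := fun i j =>
    {ω | j ∈ cliNbrs (x t) i ∧ ∀ j' ∈ cliNbrs (x t) i, j' ≠ j → R j ω < R j' ω} with hA
  set B : F → C → Set Ω := fun i j =>
    {ω | i ∈ facNbrs (x t) j ∧ ∀ i' ∈ facNbrs (x t) j, i' ≠ i → Q i ω < Q i' ω} with hB
  set U : F → Set Ω := fun i => ⋃ j : C, A i j ∩ B i j with hU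
  have hWmeas : ∀ v : {i : F // 0 < o i} ⊕ C,
      Measurable (Sum.elim (fun i : {i : F // 0 < o i} => Q i.1) R v) := by
    rintro (⟨i, hi⟩ | j)
    · exact hQmeas i hi
    · exact hRmeas j
  -- measurability of events
  have hAmeas : ∀ i j, MeasurableSet (A i j) := by
    intro i j
    have : A i j = {ω | j ∈ cliNbrs (x t) i} ∩
        ⋂ (j' : C) (_ : j' ∈ cliNbrs (x t) i) (_ : j' ≠ j), {ω | R j ω < R j' ω} := by
      ext ω; simp [hA, Set.mem_iInter]
    rw [this]
    exact (MeasurableSet.const _).inter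
      (MeasurableSet.iInter fun j' => MeasurableSet.iInter fun _ =>
        MeasurableSet.iInter fun _ => measurableSet_lt (hRmeas j) (hRmeas j'))
  have hBempty : ∀ {i j}, i ∉ facNbrs (x t) j → B i j = ∅ := by
    intro i j hij
    ext ω; simp [hB, hij]
  have hBmeas : ∀ i j, MeasurableSet (B i j) := by
    intro i j
    by_cases hij : i ∈ facNbrs (x t) j
    · have : B i j = {ω | i ∈ facNbrs (x t) j} ∩
          ⋂ (i' : F) (_ : i' ∈ facNbrs (x t) j) (_ : i' ≠ i), {ω | Q i ω < Q i' ω} := by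
        ext ω; simp [hB, Set.mem_iInter]
      rw [this]
      refine (MeasurableSet.const _).inter
        (MeasurableSet.iInter fun i' => MeasurableSet.iInter fun hi' =>
          MeasurableSet.iInter fun _ =>
            measurableSet_lt (hQmeas i (hxeq hij).2) (hQmeas i' (hxeq hi').2))
    · rw [hBempty hij]; exact MeasurableSet.empty
  have hUmeas : ∀ i, MeasurableSet (U i) :=
    fun i => MeasurableSet.iUnion fun j => (hAmeas i j).inter (hBmeas i j)
  -- disjointness of the A's
  have hAdisj : ∀ (i : F) (j j' : C), j ≠ j' → A i j ∩ A i j' = ∅ := by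
    intro i j j' hjj'
    ext ω
    simp only [hA, Set.mem_inter_iff, Set.mem_setOf_eq, Set.mem_empty_iff_false, iff_false]
    rintro ⟨⟨hjm, hjs⟩, ⟨hj'm, hj's⟩⟩
    have h1 := hjs j' hj'm (Ne.symm hjj')
    have h2 := hj's j hjm hjj'
    exact absurd (h1.trans h2) (lt_irrefl _)
  -- independence : μ (A ∩ B) = μ A * μ B
  have hABind : ∀ i j, μ (A i j ∩ B i j) = μ (A i j) * μ (B i j) := by
    intro i j
    by_cases hij : i ∈ facNbrs (x t) j
    swap
    · rw [hBempty hij]; simp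
    have hoi : 0 < o i := (hxeq hij).2
    set Fp := {i : F // 0 < o i} with hFp
    set QT : Ω → Fp → ℝ := fun ω k => Q k.1 ω with hQT
    set RT : Ω → C → ℝ := fun ω j' => R j' ω with hRT
    have hQTmeas : Measurable QT := measurable_pi_lambda _ fun k => hQmeas k.1 k.2
    have hRTmeas : Measurable RT := measurable_pi_lambda _ fun j' => hRmeas j'
    -- independence of the two tuples
    have hIQR : IndepFun RT QT μ := by
      have hS : Disjoint ((Finset.univ : Finset C).map ⟨Sum.inr, Sum.inr_injective⟩)
          ((Finset.univ : Finset Fp).map ⟨Sum.inl, Sum.inl_injective⟩) := by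
        simp [Finset.disjoint_left]
      have h1 := hindep.indepFun_finset _ _ hS hWmeas
      have h2 := h1.comp
        (φ := fun v : (((Finset.univ : Finset C).map
            ⟨Sum.inr, Sum.inr_injective⟩ : Finset (Fp ⊕ C)) → ℝ) => fun j' : C =>
          v ⟨Sum.inr j', by simp⟩)
        (ψ := fun v : (((Finset.univ : Finset Fp).map
            ⟨Sum.inl, Sum.inl_injective⟩ : Finset (Fp ⊕ C)) → ℝ) => fun k : Fp =>
          v ⟨Sum.inl k, by simp⟩)
        (measurable_pi_lambda _ fun j' => measurable_pi_apply _)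
        (measurable_pi_lambda _ fun k => measurable_pi_apply _)
      exact h2
    -- the events as preimages
    set SA : Set (C → ℝ) := {v | j ∈ cliNbrs (x t) i ∧
        ∀ j' ∈ cliNbrs (x t) i, j' ≠ j → v j < v j'} with hSA
    set SB : Set (Fp → ℝ) := {v | ∀ i₀ i' : Fp, i₀.1 = i → i'.1 ∈ facNbrs (x t) j →
        i'.1 ≠ i → v i₀ < v i'} with hSB
    have hSAmeas : MeasurableSet SA := by
      have : SA = {v : C → ℝ | j ∈ cliNbrs (x t) i} ∩
          ⋂ (j' : C) (_ : j' ∈ cliNbrs (x t) i) (_ : j' ≠ j), {v : C → ℝ | v j < v j'} := by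
        ext v; simp [hSA, Set.mem_iInter]
      rw [this]
      exact (MeasurableSet.const _).inter
        (MeasurableSet.iInter fun j' => MeasurableSet.iInter fun _ =>
          MeasurableSet.iInter fun _ =>
            measurableSet_lt (measurable_pi_apply _) (measurable_pi_apply _))
    have hSBmeas : MeasurableSet SB := by
      have : SB = ⋂ (i₀ : Fp) (i' : Fp) (_ : i₀.1 = i) (_ : i'.1 ∈ facNbrs (x t) j)
          (_ : i'.1 ≠ i), {v : Fp → ℝ | v i₀ < v i'} := by
        ext v; simp [hSB, Set.mem_iInter]
      rw [this]
      exact MeasurableSet.iInter fun i₀ => MeasurableSet.iInter fun i' =>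
        MeasurableSet.iInter fun _ => MeasurableSet.iInter fun _ =>
          MeasurableSet.iInter fun _ =>
            measurableSet_lt (measurable_pi_apply _) (measurable_pi_apply _)
    have hApre : A i j = RT ⁻¹' SA := rfl
    have hBpre : B i j = QT ⁻¹' SB := by
      ext ω
      simp only [hB, hQT, Set.mem_setOf_eq, Set.mem_preimage, hSB]
      constructor
      · rintro ⟨-, hst⟩ i₀ i' h₀ h' hne
        have := hst i'.1 h' hne
        rw [← h₀] at this
        exact this
      · intro hst
        refine ⟨hij, fun i' hi' hne => ?_⟩
        exact hst ⟨i, hoi⟩ ⟨i', (hxeq hi').2⟩ rfl hi' hne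
    rw [hApre, hBpre]
    exact hIQR.measure_inter_preimage_eq_mul _ _ hSAmeas hSBmeas
  -- the exponential clock computation
  have hBval : ∀ (i : F) (j : C), i ∈ facNbrs (x t) j → μ (B i j) = ENNReal.ofReal (o i) := by
    intro i j hij
    have hoi : 0 < o i := (hxeq hij).2
    set Fp := {i : F // 0 < o i} with hFp
    set s : Finset F := (facNbrs (x t) j).erase i with hs
    have hpos : ∀ k : {i' // i' ∈ s}, 0 < o k.1 :=
      fun k => (hxeq (Finset.mem_of_mem_erase k.2)).2
    set e : {i' // i' ∈ s} ↪ (Fp ⊕ C) :=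
      ⟨fun k => Sum.inl ⟨k.1, hpos k⟩, by
        intro a b hab
        have : a.1 = b.1 := congrArg (fun w : Fp ⊕ C => match w with
          | Sum.inl u => u.1
          | Sum.inr _ => a.1) hab
        exact Subtype.ext this⟩ with he
    set S₁ : Finset (Fp ⊕ C) := {Sum.inl ⟨i, hoi⟩} with hS₁
    set T₁ : Finset (Fp ⊕ C) := Finset.univ.map e with hT₁
    have hdisj : Disjoint S₁ T₁ := by
      rw [Finset.disjoint_left]
      intro v hv hvT
      rw [hS₁, Finset.mem_singleton] at hv
      rw [hT₁, Finset.mem_map] at hvT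
      obtain ⟨k, -, hk⟩ := hvT
      rw [hv, he] at hk
      have hki : k.1 = i := congrArg (fun w : Fp ⊕ C => match w with
        | Sum.inl u => u.1
        | Sum.inr _ => i) hk
      exact Finset.notMem_erase i _ (hki ▸ k.2)
    set YS : Ω → {i' // i' ∈ s} → ℝ := fun ω k => Q k.1 ω with hYS
    have hYSmeas : Measurable YS := measurable_pi_lambda _ fun k => hQmeas k.1 (hpos k)
    have hXY : IndepFun (Q i) YS μ := by
      have h1 := hindep.indepFun_finset S₁ T₁ hdisj hWmeas
      have h2 := h1.comp
        (φ := fun v : ({w : Fp ⊕ C // w ∈ S₁} → ℝ) =>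
          v ⟨Sum.inl ⟨i, hoi⟩, by rw [hS₁]; exact Finset.mem_singleton_self _⟩)
        (ψ := fun v : ({w : Fp ⊕ C // w ∈ T₁} → ℝ) => fun k : {i' // i' ∈ s} =>
          v ⟨e k, by rw [hT₁]; exact Finset.mem_map_of_mem e (Finset.mem_univ k)⟩)
        (measurable_pi_apply (X := fun _ : {w : Fp ⊕ C // w ∈ S₁} => ℝ) _)
        (measurable_pi_lambda _ fun k => measurable_pi_apply _)
      exact h2
    set pair : Ω → ℝ × ({i' // i' ∈ s} → ℝ) := fun ω => (Q i ω, YS ω) with hpair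
    have hpairm : Measurable pair := (hQmeas i hoi).prodMk hYSmeas
    set D : Set (ℝ × ({i' // i' ∈ s} → ℝ)) := {p | ∀ k, p.1 < p.2 k} with hD
    have hDmeas : MeasurableSet D := by
      have : D = ⋂ k, {p : ℝ × ({i' // i' ∈ s} → ℝ) | p.1 < p.2 k} := by
        ext p; simp [hD, Set.mem_iInter]
      rw [this]
      exact MeasurableSet.iInter fun k =>
        measurableSet_lt measurable_fst ((measurable_pi_apply k).comp measurable_snd)
    have hBD : B i j = pair ⁻¹' D := by
      ext ω
      simp only [hB, Set.mem_setOf_eq, Set.mem_preimage, hpair, hD, hYS]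
      constructor
      · rintro ⟨-, hst⟩ k
        exact hst k.1 (Finset.mem_of_mem_erase k.2) (Finset.ne_of_mem_erase k.2)
      · intro hst
        refine ⟨hij, fun i' hi' hne => hst ⟨i', Finset.mem_erase.mpr ⟨hne, hi'⟩⟩⟩
    haveI : IsProbabilityMeasure (Measure.map (Q i) μ) :=
      Measure.isProbabilityMeasure_map (hQmeas i hoi).aemeasurable
    haveI : IsProbabilityMeasure (Measure.map YS μ) :=
      Measure.isProbabilityMeasure_map hYSmeas.aemeasurable
    have hmain : μ (B i j) = ∫⁻ a, (Measure.map YS μ) (Prod.mk a ⁻¹' D) ∂(Measure.map (Q i) μ) := by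
      rw [hBD, ← Measure.map_apply hpairm hDmeas,
        (indepFun_iff_map_prod_eq_prod_map_map (hQmeas i hoi).aemeasurable
          hYSmeas.aemeasurable).1 hXY,
        Measure.prod_apply hDmeas]
    set b : ℝ := ∑ i' ∈ s, o i' with hb
    have hb0 : 0 ≤ b := Finset.sum_nonneg fun i' hi' =>
      le_of_lt (hxeq (Finset.mem_of_mem_erase hi')).2
    have hob : o i + b = 1 := by
      rw [hb, hs, Finset.add_sum_erase _ _ hij]
      exact hsumo j
    have hinner : ∀ a : ℝ, (Measure.map YS μ) (Prod.mk a ⁻¹' D)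
        = ∏ k : {i' // i' ∈ s}, expMeasure (o k.1) (Set.Ioi a) := by
      intro a
      have hset : MeasurableSet {v : {i' // i' ∈ s} → ℝ | ∀ k, a < v k} := by
        have : {v : {i' // i' ∈ s} → ℝ | ∀ k, a < v k}
            = ⋂ k, {v : {i' // i' ∈ s} → ℝ | a < v k} := by
          ext v; simp [Set.mem_iInter]
        rw [this]
        exact MeasurableSet.iInter fun k =>
          measurableSet_lt measurable_const (measurable_pi_apply k)
      have h1 : Prod.mk a ⁻¹' D = {v : {i' // i' ∈ s} → ℝ | ∀ k, a < v k} := rfl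
      rw [h1, Measure.map_apply hYSmeas hset]
      have h2 : YS ⁻¹' {v | ∀ k, a < v k}
          = ⋂ v ∈ T₁, (Sum.elim (fun i : Fp => Q i.1) R v) ⁻¹' (Set.Ioi a) := by
        ext ω
        simp only [Set.mem_preimage, Set.mem_setOf_eq, Set.mem_iInter, hYS]
        constructor
        · intro hk v hv
          rw [hT₁, Finset.mem_map] at hv
          obtain ⟨k, -, hk'⟩ := hv
          rw [← hk', he]
          exact hk k
        · intro hv k
          have := hv (e k) (by rw [hT₁]; exact Finset.mem_map_of_mem e (Finset.mem_univ k))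
          rw [he] at this
          exact this
      rw [h2, hindep.measure_inter_preimage_eq_mul T₁
        (sets := fun _ => Set.Ioi a) (fun v _ => measurableSet_Ioi), hT₁,
        Finset.prod_map]
      refine Finset.prod_congr rfl fun k _ => ?_
      have : (Sum.elim (fun i : Fp => Q i.1) R (e k)) ⁻¹' (Set.Ioi a)
          = Q k.1 ⁻¹' (Set.Ioi a) := by rw [he]; rfl
      rw [this, ← Measure.map_apply (hQmeas k.1 (hpos k)) measurableSet_Ioi,
        hQdist k.1 (hpos k)]
    have hae : (fun a : ℝ => ∏ k : {i' // i' ∈ s}, expMeasure (o k.1) (Set.Ioi a))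
        =ᵐ[expMeasure (o i)] fun a => ENNReal.ofReal (Real.exp (-(b * a))) := by
      have h0 : expMeasure (o i) (Set.Iio 0) = 0 := DFL11Aux.expMeasure_Iio_zero (o i)
      have hae0 : ∀ᵐ a ∂(expMeasure (o i)), (0:ℝ) ≤ a := by
        rw [MeasureTheory.ae_iff]
        convert h0 using 2
        ext a; simp
      filter_upwards [hae0] with a ha
      have h1 : ∀ k : {i' // i' ∈ s}, expMeasure (o k.1) (Set.Ioi a)
          = ENNReal.ofReal (Real.exp (-(o k.1 * a))) :=
        fun k => DFL11Aux.expMeasure_Ioi (hpos k) ha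
      rw [Finset.prod_congr rfl fun k _ => h1 k,
        ← ENNReal.ofReal_prod_of_nonneg (fun k _ => le_of_lt (Real.exp_pos _)),
        ← Real.exp_sum]
      congr 2
      rw [Finset.sum_neg_distrib, ← Finset.sum_mul, Finset.sum_coe_sort s o, ← hb]
    rw [hmain, hQdist i hoi, lintegral_congr hinner, lintegral_congr_ae hae,
      DFL11Aux.lintegral_exp_neg_expMeasure hoi hb0, hob, div_one]
  -- the key probability bound
  have key : ∀ i, (μ (U i)).toReal ≤ y t i := by
    intro i
    by_cases hyi : y t i = 0
    · have hUe : U i = ∅ := by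
        rw [hU]
        simp only [Set.iUnion_eq_empty]
        intro j
        have : i ∉ facNbrs (x t) j := by
          intro hmem
          have := (hxeq hmem).1
          rw [mem_facNbrs] at hmem
          rcases hx0 i j with h | h
          · rw [h] at hmem; exact absurd hmem (lt_irrefl 0)
          · rw [h, hyi] at hmem; exact absurd hmem (lt_irrefl 0)
        rw [hBempty this, Set.inter_empty]
      rw [hUe, hyi]
      simp
    · have hyoi : y t i = o i := (hyo t ht i).resolve_left hyi
      have hoi : 0 < o i := by
        rcases (hy01 i).1.lt_or_eq with h | h
        · rwa [hyoi] at h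
        · exact absurd (hyoi ▸ h.symm) hyi
      have hBle : ∀ j, μ (B i j) ≤ ENNReal.ofReal (o i) := by
        intro j
        by_cases hij : i ∈ facNbrs (x t) j
        · exact le_of_eq (hBval i j hij)
        · rw [hBempty hij]; simp
      have hAsum : ∑ j : C, μ (A i j) ≤ 1 := by
        have hdis : Pairwise (Function.onFun Disjoint (A i)) := by
          intro j j' hjj'
          exact Set.disjoint_iff_inter_eq_empty.mpr (hAdisj i j j' hjj')
        calc ∑ j : C, μ (A i j) = μ (⋃ j : C, A i j) := by
              rw [measure_iUnion hdis (fun j => hAmeas i j), tsum_fintype]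
          _ ≤ 1 := prob_le_one
      have hchain : μ (U i) ≤ ENNReal.ofReal (o i) := by
        calc μ (U i) ≤ ∑ j : C, μ (A i j ∩ B i j) := by
              rw [hU]
              exact (measure_iUnion_le _).trans (le_of_eq (tsum_fintype _))
          _ = ∑ j : C, μ (A i j) * μ (B i j) :=
              Finset.sum_congr rfl fun j _ => hABind i j
          _ ≤ ∑ j : C, μ (A i j) * ENNReal.ofReal (o i) :=
              Finset.sum_le_sum fun j _ => mul_le_mul_right (hBle j) _
          _ = (∑ j : C, μ (A i j)) * ENNReal.ofReal (o i) := by rw [Finset.sum_mul]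
          _ ≤ 1 * ENNReal.ofReal (o i) := mul_le_mul_left hAsum _
          _ = ENNReal.ofReal (o i) := one_mul _
      rw [hyoi]
      exact ENNReal.toReal_le_of_le_ofReal (le_of_lt hoi) hchain
  -- the good event
  have hgood : ∀ᵐ ω ∂μ, (∀ j j' : C, j ≠ j' → R j ω ≠ R j' ω) ∧
      (∀ i i' : F, 0 < o i → 0 < o i' → i ≠ i' → Q i ω ≠ Q i' ω) := by
    have hne : ∀ {X Y : Ω → ℝ}, Measurable X → Measurable Y → IndepFun X Y μ →
        (∀ r : ℝ, 0 < r → Measure.map Y μ = expMeasure r → False) = False → True := fun _ _ _ _ => trivial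
    refine Filter.Eventually.and ?_ ?_
    · rw [MeasureTheory.ae_all_iff]
      intro j
      rw [MeasureTheory.ae_all_iff]
      intro j'
      by_cases hjj' : j = j'
      · exact Filter.Eventually.of_forall fun ω h => absurd hjj' h
      · have h0 : μ {ω | R j ω = R j' ω} = 0 :=
          DFL11Aux.measure_eq_zero_of_indep_exp μ (hRmeas j) (hRmeas j')
            (hindep.indepFun (show (Sum.inr j : {i : F // 0 < o i} ⊕ C) ≠ Sum.inr j' by
              simp [hjj'])) one_pos (hRdist j')
        rw [MeasureTheory.ae_iff]
        convert h0 using 2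
        ext ω
        simp only [Set.mem_setOf_eq]
        tauto
    · rw [MeasureTheory.ae_all_iff]
      intro i
      rw [MeasureTheory.ae_all_iff]
      intro i'
      by_cases hi : 0 < o i
      swap
      · exact Filter.Eventually.of_forall fun ω h => absurd h hi
      by_cases hi' : 0 < o i'
      swap
      · exact Filter.Eventually.of_forall fun ω _ h => absurd h hi'
      by_cases hii' : i = i'
      · exact Filter.Eventually.of_forall fun ω _ _ h => absurd hii' h
      · have h0 : μ {ω | Q i ω = Q i' ω} = 0 :=
          DFL11Aux.measure_eq_zero_of_indep_exp μ (hQmeas i hi) (hQmeas i' hi')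
            (hindep.indepFun (show (Sum.inl ⟨i, hi⟩ : {i : F // 0 < o i} ⊕ C) ≠ Sum.inl ⟨i', hi'⟩
              by simp [hii'])) hi' (hQdist i' hi')
        rw [MeasureTheory.ae_iff]
        convert h0 using 2
        ext ω
        simp only [Set.mem_setOf_eq]
        tauto
  -- pointwise identification on the good event
  have hptwise : ∀ ω, ((∀ j j' : C, j ≠ j' → R j ω ≠ R j' ω) ∧
      (∀ i i' : F, 0 < o i → 0 < o i' → i ≠ i' → Q i ω ≠ Q i' ω)) →
      ∀ i : F, (if opens (x t) (fun i' => Q i' ω) (fun j' => R j' ω) i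
        then (1:ℝ) else 0) = Set.indicator (U i) (fun _ => (1:ℝ)) ω := by
    intro ω hω i
    have hiff := opens_iff (x t) (fun i' => Q i' ω) (fun j' => R j' ω)
      (fun i j j' hj hj' hne => hω.1 j j' hne)
      (fun j i i' hi hi' hne => hω.2 i i' (hxeq hi).2 (hxeq hi').2 hne) i
    have hUmem : ω ∈ U i ↔ opens (x t) (fun i' => Q i' ω) (fun j' => R j' ω) i := by
      rw [hiff]
      simp only [hU, Set.mem_iUnion, Set.mem_inter_iff, hA, hB, Set.mem_setOf_eq]
    by_cases hop : opens (x t) (fun i' => Q i' ω) (fun j' => R j' ω) i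
    · rw [if_pos hop, Set.indicator_of_mem (hUmem.mpr hop)]
    · rw [if_neg hop, Set.indicator_of_notMem (fun hm => hop (hUmem.mp hm))]
  -- putting it together
  have hInt : ∀ i : F, Integrable (fun ω => f i * Set.indicator (U i) (fun _ => (1:ℝ)) ω) μ :=
    fun i => ((integrable_const (1:ℝ)).indicator (hUmeas i)).const_mul _
  have hcongr : ∫ ω, (∑ i : F,
      f i * (if opens (x t) (fun i' => Q i' ω) (fun j' => R j' ω) i
             then (1 : ℝ) else 0)) ∂μ
      = ∫ ω, (∑ i : F, f i * Set.indicator (U i) (fun _ => (1:ℝ)) ω) ∂μ := by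
    refine integral_congr_ae ?_
    filter_upwards [hgood] with ω hω
    exact Finset.sum_congr rfl fun i _ => by rw [hptwise ω hω i]
  rw [hcongr, integral_finset_sum _ (fun i _ => hInt i)]
  refine Finset.sum_le_sum fun i _ => ?_
  rw [integral_const_mul]
  refine mul_le_mul_of_nonneg_left ?_ (hf i)
  have h1 : ∫ ω, Set.indicator (U i) (fun _ => (1:ℝ)) ω ∂μ = (μ (U i)).toReal := by
    rw [integral_indicator (hUmeas i)]
    simp
    rfl
  rw [h1]
  exact key i

end DFL11
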